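/- arXiv:2402.06431 — 2 statements merged into one kernel-verified Lean document; each statement's English description precedes it below -/
import Mathlib

section
/- Cramér–Rao bound for possibly biased statistics: if the μ-dominated model is differentiable in L²(μ) at θ₀ with Fisher information I(θ₀) = 4∫ ξ̇_{θ₀}² dμ > 0, and T is a bounded statistic with mean function γ_T(θ) = E_θ[T], then Var_{θ₀}(T) ≥ (γ'_T(θ₀))² / I(θ₀). -/
open MeasureTheory Filter Topology Set

lemma my_int_mul {X : Type*} [MeasurableSpace X] {μ : Measure X} {u v : X → ℝ}
    (hu : MemLp u 2 μ) (hv : MemLp v 2 μ) : Integrable (fun x => u x * v x) μ := by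
  have h := L2.integrable_inner (𝕜 := ℝ) (hu.toLp u) (hv.toLp v)
  refine h.congr ?_
  filter_upwards [hu.coeFn_toLp, hv.coeFn_toLp] with x hx hy
  simp [hx, hy, RCLike.inner_apply, mul_comm]

lemma my_cs {X : Type*} [MeasurableSpace X] {μ : Measure X} {u v : X → ℝ}
    (hu : MemLp u 2 μ) (hv : MemLp v 2 μ) :
    |∫ x, u x * v x ∂μ| ≤ Real.sqrt (∫ x, u x ^ 2 ∂μ) * Real.sqrt (∫ x, v x ^ 2 ∂μ) := by
  set U := hu.toLp u
  set V := hv.toLp v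
  have hUV : (inner ℝ U V : ℝ) = ∫ x, u x * v x ∂μ := by
    rw [L2.inner_def]
    refine integral_congr_ae ?_
    filter_upwards [hu.coeFn_toLp, hv.coeFn_toLp] with x hx hy
    simp [hx, hy, RCLike.inner_apply, U, V, mul_comm]
  have hU : ‖U‖ = Real.sqrt (∫ x, u x ^ 2 ∂μ) := by
    have : (inner ℝ U U : ℝ) = ∫ x, u x ^ 2 ∂μ := by
      rw [L2.inner_def]
      refine integral_congr_ae ?_
      filter_upwards [hu.coeFn_toLp] with x hx
      simp [hx, RCLike.inner_apply, U, sq]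
    rw [← Real.sqrt_sq (norm_nonneg U), ← this, real_inner_self_eq_norm_sq]
  have hV : ‖V‖ = Real.sqrt (∫ x, v x ^ 2 ∂μ) := by
    have : (inner ℝ V V : ℝ) = ∫ x, v x ^ 2 ∂μ := by
      rw [L2.inner_def]
      refine integral_congr_ae ?_
      filter_upwards [hv.coeFn_toLp] with x hx
      simp [hx, RCLike.inner_apply, V, sq]
    rw [← Real.sqrt_sq (norm_nonneg V), ← this, real_inner_self_eq_norm_sq]
  calc |∫ x, u x * v x ∂μ| = |(inner ℝ U V : ℝ)| := by rw [hUV]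
    _ ≤ ‖U‖ * ‖V‖ := abs_real_inner_le_norm U V
    _ = _ := by rw [hU, hV]

lemma key_tendsto {X : Type*} [MeasurableSpace X] (μ : Measure X)
    (Θ : Set ℝ) (hΘ : IsOpen Θ) (θ₀ : ℝ) (hθ₀ : θ₀ ∈ Θ)
    (f : ℝ → X → ℝ)
    (hf_meas : Measurable (Function.uncurry f))
    (hf_nonneg : ∀ θ x, 0 ≤ f θ x)
    (hf_prob : ∀ θ ∈ Θ, ∫ x, f θ x ∂μ = 1)
    (D : X → ℝ) (hD : MemLp D 2 μ)
    (hdiff : Tendsto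
      (fun θ => (∫ x, (Real.sqrt (f θ x) - Real.sqrt (f θ₀ x) - (θ - θ₀) * D x) ^ 2 ∂μ)
        / (θ - θ₀) ^ 2) (𝓝[≠] θ₀) (𝓝 0))
    (S : X → ℝ) (hS_meas : Measurable S) (MS : ℝ) (hS : ∀ᵐ x ∂μ, |S x| ≤ MS) :
    Tendsto (fun θ => ((∫ x, S x * f θ x ∂μ) - ∫ x, S x * f θ₀ x ∂μ) / (θ - θ₀))
      (𝓝[≠] θ₀) (𝓝 (2 * ∫ x, (S x * D x) * Real.sqrt (f θ₀ x) ∂μ)) := by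
  -- abbreviations
  have hmeas : ∀ θ, Measurable (f θ) := fun θ => hf_meas.comp measurable_prodMk_left
  have hint : ∀ θ ∈ Θ, Integrable (f θ) μ := by
    intro θ hθ
    by_contra h
    have h1 := hf_prob θ hθ
    rw [integral_undef h] at h1
    exact one_ne_zero h1.symm
  have hξmem : ∀ θ ∈ Θ, MemLp (fun x => Real.sqrt (f θ x)) 2 μ := by
    intro θ hθ
    rw [memLp_two_iff_integrable_sq ((hmeas θ).sqrt.aestronglyMeasurable)]
    refine (hint θ hθ).congr (Eventually.of_forall fun x => ?_)
    exact (Real.sq_sqrt (hf_nonneg θ x)).symm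
  have hξint : ∀ θ ∈ Θ, ∫ x, Real.sqrt (f θ x) ^ 2 ∂μ = 1 := by
    intro θ hθ
    rw [← hf_prob θ hθ]
    exact integral_congr_ae (Eventually.of_forall fun x => Real.sq_sqrt (hf_nonneg θ x))
  have hξ₀mem : MemLp (fun x => Real.sqrt (f θ₀ x)) 2 μ := hξmem θ₀ hθ₀
  have hSw : ∀ {w : X → ℝ}, MemLp w 2 μ → MemLp (fun x => S x * w x) 2 μ := by
    intro w hw
    refine hw.of_le_mul (c := MS) (hS_meas.aestronglyMeasurable.mul hw.1) ?_
    filter_upwards [hS] with x hx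
    rw [norm_mul]
    exact mul_le_mul_of_nonneg_right (by rwa [Real.norm_eq_abs]) (norm_nonneg _)
  have hSf : ∀ θ ∈ Θ, Integrable (fun x => S x * f θ x) μ := by
    intro θ hθ
    refine ((hint θ hθ).const_mul MS).mono'
      (hS_meas.aestronglyMeasurable.mul (hmeas θ).aestronglyMeasurable) ?_
    filter_upwards [hS] with x hx
    rw [norm_mul, Real.norm_eq_abs, Real.norm_eq_abs, abs_of_nonneg (hf_nonneg θ x)]
    exact mul_le_mul_of_nonneg_right hx (hf_nonneg θ x)
  have hrmem : ∀ θ ∈ Θ, MemLp (fun x => Real.sqrt (f θ x) - Real.sqrt (f θ₀ x) - (θ - θ₀) * D x) 2 μ := by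
    intro θ hθ
    exact ((hξmem θ hθ).sub hξ₀mem).sub (hD.const_mul (θ - θ₀))
  have haddmem : ∀ θ ∈ Θ, MemLp (fun x => Real.sqrt (f θ x) + Real.sqrt (f θ₀ x)) 2 μ := by
    intro θ hθ
    exact (hξmem θ hθ).add hξ₀mem
  -- constants
  set A : ℝ := ∫ x, (S x * D x) * Real.sqrt (f θ₀ x) ∂μ with hA
  set C : ℝ := ∫ x, (S x * D x) * D x ∂μ with hC
  set NSD : ℝ := Real.sqrt (∫ x, (S x * D x) ^ 2 ∂μ) with hNSD
  have hRnonneg : ∀ θ : ℝ, 0 ≤ ∫ x, (Real.sqrt (f θ x) - Real.sqrt (f θ₀ x) - (θ - θ₀) * D x) ^ 2 ∂μ :=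
    fun θ => integral_nonneg (fun x => sq_nonneg _)
  -- bound on the extra L² norm
  have hN4 : ∀ θ ∈ Θ, Real.sqrt (∫ x, (S x * (Real.sqrt (f θ x) + Real.sqrt (f θ₀ x))) ^ 2 ∂μ) ≤ 2 * |MS| := by
    intro θ hθ
    have h1 : (∫ x, (S x * (Real.sqrt (f θ x) + Real.sqrt (f θ₀ x))) ^ 2 ∂μ)
        ≤ ∫ x, MS ^ 2 * (Real.sqrt (f θ x) + Real.sqrt (f θ₀ x)) ^ 2 ∂μ := by
      refine integral_mono_ae ((hSw (haddmem θ hθ)).integrable_sq)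
        (((haddmem θ hθ).integrable_sq).const_mul _) ?_
      filter_upwards [hS] with x hx
      rw [mul_pow]
      have : S x ^ 2 ≤ MS ^ 2 := by nlinarith [abs_nonneg (S x), le_abs_self (S x), neg_abs_le (S x)]
      nlinarith [sq_nonneg (Real.sqrt (f θ x) + Real.sqrt (f θ₀ x))]
    have h2 : (∫ x, (Real.sqrt (f θ x) + Real.sqrt (f θ₀ x)) ^ 2 ∂μ) ≤ 4 := by
      have h3 : (∫ x, (Real.sqrt (f θ x) + Real.sqrt (f θ₀ x)) ^ 2 ∂μ)
          ≤ ∫ x, 2 * Real.sqrt (f θ x) ^ 2 + 2 * Real.sqrt (f θ₀ x) ^ 2 ∂μ := by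
        refine integral_mono ((haddmem θ hθ).integrable_sq)
          ((((hξmem θ hθ).integrable_sq).const_mul 2).add ((hξ₀mem.integrable_sq).const_mul 2))
          (fun x => by nlinarith [sq_nonneg (Real.sqrt (f θ x) - Real.sqrt (f θ₀ x))])
      rw [integral_add (((hξmem θ hθ).integrable_sq).const_mul 2) ((hξ₀mem.integrable_sq).const_mul 2),
        integral_const_mul, integral_const_mul, hξint θ hθ, hξint θ₀ hθ₀] at h3
      linarith
    calc Real.sqrt (∫ x, (S x * (Real.sqrt (f θ x) + Real.sqrt (f θ₀ x))) ^ 2 ∂μ)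
        ≤ Real.sqrt (MS ^ 2 * 4) := by
          refine Real.sqrt_le_sqrt (h1.trans ?_)
          rw [integral_const_mul]
          have h4 : 0 ≤ MS ^ 2 := sq_nonneg MS
          nlinarith
      _ = 2 * |MS| := by
          rw [Real.sqrt_mul (sq_nonneg MS), Real.sqrt_sq_eq_abs,
            show (4:ℝ) = 2 ^ 2 by norm_num, Real.sqrt_sq (by norm_num : (0:ℝ) ≤ 2)]
          ring
  -- the identity for θ ∈ Θ, θ ≠ θ₀
  have hiden : ∀ θ ∈ Θ, θ ≠ θ₀ →
      ((∫ x, S x * f θ x ∂μ) - ∫ x, S x * f θ₀ x ∂μ) / (θ - θ₀) - 2 * A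
      = (θ - θ₀) * C
        + (∫ x, (S x * D x) * (Real.sqrt (f θ x) - Real.sqrt (f θ₀ x) - (θ - θ₀) * D x) ∂μ)
        + (∫ x, (S x * (Real.sqrt (f θ x) + Real.sqrt (f θ₀ x)))
            * (Real.sqrt (f θ x) - Real.sqrt (f θ₀ x) - (θ - θ₀) * D x) ∂μ) / (θ - θ₀) := by
    intro θ hθ hne
    have ht : θ - θ₀ ≠ 0 := sub_ne_zero.mpr hne
    have i0 : Integrable (fun x => (S x * D x) * Real.sqrt (f θ₀ x)) μ := my_int_mul (hSw hD) hξ₀mem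
    have i1 : Integrable (fun x => (S x * D x) * D x) μ := my_int_mul (hSw hD) hD
    have i2 : Integrable (fun x => (S x * D x) * (Real.sqrt (f θ x) - Real.sqrt (f θ₀ x) - (θ - θ₀) * D x)) μ :=
      my_int_mul (hSw hD) (hrmem θ hθ)
    have i3 : Integrable (fun x => (S x * (Real.sqrt (f θ x) + Real.sqrt (f θ₀ x)))
        * (Real.sqrt (f θ x) - Real.sqrt (f θ₀ x) - (θ - θ₀) * D x)) μ :=
      my_int_mul (hSw (haddmem θ hθ)) (hrmem θ hθ)
    have hsub : (∫ x, S x * f θ x ∂μ) - ∫ x, S x * f θ₀ x ∂μ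
        = (θ - θ₀) * (2 * A) + ((θ - θ₀) ^ 2 * C
          + ((θ - θ₀) * (∫ x, (S x * D x) * (Real.sqrt (f θ x) - Real.sqrt (f θ₀ x) - (θ - θ₀) * D x) ∂μ)
          + ∫ x, (S x * (Real.sqrt (f θ x) + Real.sqrt (f θ₀ x)))
              * (Real.sqrt (f θ x) - Real.sqrt (f θ₀ x) - (θ - θ₀) * D x) ∂μ)) := by
      have hpt : ∫ x, (S x * f θ x - S x * f θ₀ x) ∂μ
          = ∫ x, ((θ - θ₀) * (2 * ((S x * D x) * Real.sqrt (f θ₀ x)))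
            + ((θ - θ₀) * ((θ - θ₀) * ((S x * D x) * D x))
            + ((θ - θ₀) * ((S x * D x) * (Real.sqrt (f θ x) - Real.sqrt (f θ₀ x) - (θ - θ₀) * D x))
            + (S x * (Real.sqrt (f θ x) + Real.sqrt (f θ₀ x)))
              * (Real.sqrt (f θ x) - Real.sqrt (f θ₀ x) - (θ - θ₀) * D x)))) ∂μ := by
        refine integral_congr_ae (Eventually.of_forall fun x => ?_)
        have e1 : f θ x = Real.sqrt (f θ x) ^ 2 := (Real.sq_sqrt (hf_nonneg θ x)).symm
        have e2 : f θ₀ x = Real.sqrt (f θ₀ x) ^ 2 := (Real.sq_sqrt (hf_nonneg θ₀ x)).symm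
        beta_reduce
        linear_combination (S x) * e1 - (S x) * e2
      have j0 : Integrable (fun x => (θ - θ₀) * (2 * ((S x * D x) * Real.sqrt (f θ₀ x)))) μ := by
        exact (i0.const_mul 2).const_mul _
      have j1 : Integrable (fun x => (θ - θ₀) * ((θ - θ₀) * ((S x * D x) * D x))) μ := by
        exact (i1.const_mul _).const_mul _
      have j2 : Integrable (fun x => (θ - θ₀) * ((S x * D x)
          * (Real.sqrt (f θ x) - Real.sqrt (f θ₀ x) - (θ - θ₀) * D x))) μ := by
        exact i2.const_mul _
      have j23 : Integrable (fun x => (θ - θ₀) * ((S x * D x)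
          * (Real.sqrt (f θ x) - Real.sqrt (f θ₀ x) - (θ - θ₀) * D x))
          + (S x * (Real.sqrt (f θ x) + Real.sqrt (f θ₀ x)))
            * (Real.sqrt (f θ x) - Real.sqrt (f θ₀ x) - (θ - θ₀) * D x)) μ := by
        exact j2.add i3
      have j123 : Integrable (fun x => (θ - θ₀) * ((θ - θ₀) * ((S x * D x) * D x))
          + ((θ - θ₀) * ((S x * D x)
          * (Real.sqrt (f θ x) - Real.sqrt (f θ₀ x) - (θ - θ₀) * D x))
          + (S x * (Real.sqrt (f θ x) + Real.sqrt (f θ₀ x)))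
            * (Real.sqrt (f θ x) - Real.sqrt (f θ₀ x) - (θ - θ₀) * D x))) μ := by
        exact j1.add j23
      rw [← integral_sub (hSf θ hθ) (hSf θ₀ hθ₀), hpt,
        integral_add j0 j123,
        integral_add j1 j23,
        integral_add j2 i3,
        integral_const_mul, integral_const_mul, integral_const_mul, integral_const_mul,
        integral_const_mul, hA, hC]
      ring
    rw [hsub]
    field_simp
    ring
  -- eventually facts
  have hmemF : ∀ᶠ θ in 𝓝[≠] θ₀, θ ∈ Θ :=
    eventually_nhdsWithin_of_eventually_nhds (hΘ.eventually_mem hθ₀)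
  have hneF : ∀ᶠ θ in 𝓝[≠] θ₀, θ ≠ θ₀ := by
    filter_upwards [eventually_mem_nhdsWithin] with θ h
    simpa using h
  -- the bound function
  set B : ℝ → ℝ := fun θ => |θ - θ₀| * |C|
    + NSD * Real.sqrt (∫ x, (Real.sqrt (f θ x) - Real.sqrt (f θ₀ x) - (θ - θ₀) * D x) ^ 2 ∂μ)
    + (2 * |MS|) * Real.sqrt ((∫ x, (Real.sqrt (f θ x) - Real.sqrt (f θ₀ x) - (θ - θ₀) * D x) ^ 2 ∂μ)
        / (θ - θ₀) ^ 2) with hB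
  have hsqrt0 : Tendsto Real.sqrt (𝓝 0) (𝓝 0) := by
    simpa [Real.sqrt_zero] using Real.continuous_sqrt.tendsto 0
  have t3 : Tendsto (fun θ => Real.sqrt ((∫ x, (Real.sqrt (f θ x) - Real.sqrt (f θ₀ x)
      - (θ - θ₀) * D x) ^ 2 ∂μ) / (θ - θ₀) ^ 2)) (𝓝[≠] θ₀) (𝓝 0) := hsqrt0.comp hdiff
  have t2 : Tendsto (fun θ => ∫ x, (Real.sqrt (f θ x) - Real.sqrt (f θ₀ x)
      - (θ - θ₀) * D x) ^ 2 ∂μ) (𝓝[≠] θ₀) (𝓝 0) := by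
    have hcongr : (fun θ => ∫ x, (Real.sqrt (f θ x) - Real.sqrt (f θ₀ x)
        - (θ - θ₀) * D x) ^ 2 ∂μ) =ᶠ[𝓝[≠] θ₀] fun θ => (θ - θ₀) ^ 2
          * ((∫ x, (Real.sqrt (f θ x) - Real.sqrt (f θ₀ x) - (θ - θ₀) * D x) ^ 2 ∂μ)
            / (θ - θ₀) ^ 2) := by
      filter_upwards [hneF] with θ hθ
      have ht : θ - θ₀ ≠ 0 := sub_ne_zero.mpr hθ
      field_simp
    rw [tendsto_congr' hcongr]
    have hsq : Tendsto (fun θ => (θ - θ₀) ^ 2) (𝓝[≠] θ₀) (𝓝 0) := by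
      have h : Tendsto (fun θ : ℝ => (θ - θ₀) ^ 2) (𝓝 θ₀) (𝓝 ((θ₀ - θ₀) ^ 2)) :=
        Continuous.tendsto (by continuity) θ₀
      simpa using h.mono_left nhdsWithin_le_nhds
    simpa using hsq.mul hdiff
  have t1 : Tendsto (fun θ => |θ - θ₀|) (𝓝[≠] θ₀) (𝓝 0) := by
    have h : Tendsto (fun θ : ℝ => |θ - θ₀|) (𝓝 θ₀) (𝓝 (|θ₀ - θ₀|)) :=
      Continuous.tendsto (by continuity) θ₀
    simpa using h.mono_left nhdsWithin_le_nhds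
  have t2s : Tendsto (fun θ => Real.sqrt (∫ x, (Real.sqrt (f θ x) - Real.sqrt (f θ₀ x)
      - (θ - θ₀) * D x) ^ 2 ∂μ)) (𝓝[≠] θ₀) (𝓝 0) := by
    exact hsqrt0.comp t2
  have hBtend : Tendsto B (𝓝[≠] θ₀) (𝓝 0) := by
    rw [hB]
    have h := ((t1.mul_const (|C|)).add (t2s.const_mul NSD)).add (t3.const_mul (2 * |MS|))
    simpa using h
  have hUb : ∀ᶠ θ in 𝓝[≠] θ₀,
      ‖((∫ x, S x * f θ x ∂μ) - ∫ x, S x * f θ₀ x ∂μ) / (θ - θ₀) - 2 * A‖ ≤ B θ := by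
    filter_upwards [hmemF, hneF] with θ hθ hne
    rw [hiden θ hθ hne, Real.norm_eq_abs]
    have ht : θ - θ₀ ≠ 0 := sub_ne_zero.mpr hne
    have htpos : 0 < |θ - θ₀| := abs_pos.mpr ht
    have b2 : |∫ x, (S x * D x) * (Real.sqrt (f θ x) - Real.sqrt (f θ₀ x) - (θ - θ₀) * D x) ∂μ|
        ≤ NSD * Real.sqrt (∫ x, (Real.sqrt (f θ x) - Real.sqrt (f θ₀ x) - (θ - θ₀) * D x) ^ 2 ∂μ) :=
      my_cs (hSw hD) (hrmem θ hθ)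
    have b3 : |∫ x, (S x * (Real.sqrt (f θ x) + Real.sqrt (f θ₀ x)))
        * (Real.sqrt (f θ x) - Real.sqrt (f θ₀ x) - (θ - θ₀) * D x) ∂μ|
        ≤ (2 * |MS|) * Real.sqrt (∫ x, (Real.sqrt (f θ x) - Real.sqrt (f θ₀ x)
            - (θ - θ₀) * D x) ^ 2 ∂μ) :=
      (my_cs (hSw (haddmem θ hθ)) (hrmem θ hθ)).trans
        (mul_le_mul_of_nonneg_right (hN4 θ hθ) (Real.sqrt_nonneg _))
    have hsqdiv : Real.sqrt ((∫ x, (Real.sqrt (f θ x) - Real.sqrt (f θ₀ x)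
        - (θ - θ₀) * D x) ^ 2 ∂μ) / (θ - θ₀) ^ 2)
        = Real.sqrt (∫ x, (Real.sqrt (f θ x) - Real.sqrt (f θ₀ x)
            - (θ - θ₀) * D x) ^ 2 ∂μ) / |θ - θ₀| := by
      rw [Real.sqrt_div (hRnonneg θ), Real.sqrt_sq_eq_abs]
    have b3' : |(∫ x, (S x * (Real.sqrt (f θ x) + Real.sqrt (f θ₀ x)))
        * (Real.sqrt (f θ x) - Real.sqrt (f θ₀ x) - (θ - θ₀) * D x) ∂μ) / (θ - θ₀)|
        ≤ (2 * |MS|) * Real.sqrt ((∫ x, (Real.sqrt (f θ x) - Real.sqrt (f θ₀ x)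
            - (θ - θ₀) * D x) ^ 2 ∂μ) / (θ - θ₀) ^ 2) := by
      rw [abs_div, hsqdiv, ← mul_div_assoc]
      exact (div_le_div_iff_of_pos_right htpos).mpr b3
    calc |(θ - θ₀) * C
        + (∫ x, (S x * D x) * (Real.sqrt (f θ x) - Real.sqrt (f θ₀ x) - (θ - θ₀) * D x) ∂μ)
        + (∫ x, (S x * (Real.sqrt (f θ x) + Real.sqrt (f θ₀ x)))
            * (Real.sqrt (f θ x) - Real.sqrt (f θ₀ x) - (θ - θ₀) * D x) ∂μ) / (θ - θ₀)|
        ≤ |(θ - θ₀) * C|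
          + |∫ x, (S x * D x) * (Real.sqrt (f θ x) - Real.sqrt (f θ₀ x) - (θ - θ₀) * D x) ∂μ|
          + |(∫ x, (S x * (Real.sqrt (f θ x) + Real.sqrt (f θ₀ x)))
              * (Real.sqrt (f θ x) - Real.sqrt (f θ₀ x) - (θ - θ₀) * D x) ∂μ) / (θ - θ₀)| :=
        (abs_add_le _ _).trans (add_le_add_left (abs_add_le _ _) _)
      _ ≤ B θ := by
        rw [hB, abs_mul]
        exact add_le_add (add_le_add le_rfl b2) b3'
  have hQ0 := squeeze_zero_norm' hUb hBtend
  have := hQ0.add_const (2 * A)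
  simpa using this

/-- Cramér–Rao bound for possibly biased statistics:
if the μ-dominated model is differentiable in `L²(μ)` at `θ₀` with Fisher information
`I(θ₀) = 4∫ ξ̇² dμ > 0`, and `T` is a bounded statistic with mean function
`γ_T(θ) = E_θ[T]`, then `Var_{θ₀}(T) ≥ (γ'_T(θ₀))² / I(θ₀)`. -/
theorem stmt_3 {X : Type*} [MeasurableSpace X] (μ : Measure X) [SigmaFinite μ]
    (Θ : Set ℝ) (hΘ : IsOpen Θ) (θ₀ : ℝ) (hθ₀ : θ₀ ∈ Θ)
    (f : ℝ → X → ℝ)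
    (hf_meas : Measurable (Function.uncurry f))
    (hf_nonneg : ∀ θ x, 0 ≤ f θ x)
    (hf_prob : ∀ θ ∈ Θ, ∫ x, f θ x ∂μ = 1)
    (D : X → ℝ) (hD : MemLp D 2 μ)
    (hdiff : Tendsto
      (fun θ => (∫ x, (Real.sqrt (f θ x) - Real.sqrt (f θ₀ x) - (θ - θ₀) * D x) ^ 2 ∂μ)
        / (θ - θ₀) ^ 2) (𝓝[≠] θ₀) (𝓝 0))
    (hI : 0 < 4 * ∫ x, D x ^ 2 ∂μ)
    (T : X → ℝ) (hT_meas : Measurable T) (M : ℝ) (hT : ∀ᵐ x ∂μ, |T x| ≤ M)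
    (g : ℝ) (hderiv : HasDerivAt (fun θ => ∫ x, T x * f θ x ∂μ) g θ₀) :
    (∫ x, (T x - ∫ y, T y * f θ₀ y ∂μ) ^ 2 * f θ₀ x ∂μ)
      ≥ g ^ 2 / (4 * ∫ x, D x ^ 2 ∂μ) := by
  -- identify g
  have hTt := key_tendsto μ Θ hΘ θ₀ hθ₀ f hf_meas hf_nonneg hf_prob D hD hdiff
    T hT_meas M hT
  have hslope : Tendsto (fun θ => ((∫ x, T x * f θ x ∂μ) - ∫ x, T x * f θ₀ x ∂μ) / (θ - θ₀))
      (𝓝[≠] θ₀) (𝓝 g) := by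
    have h := hasDerivAt_iff_tendsto_slope.mp hderiv
    simpa [slope_fun_def_field] using h
  have hg : g = 2 * ∫ x, (T x * D x) * Real.sqrt (f θ₀ x) ∂μ :=
    tendsto_nhds_unique hslope hTt
  -- the score has mean zero
  have h1t := key_tendsto μ Θ hΘ θ₀ hθ₀ f hf_meas hf_nonneg hf_prob D hD hdiff
    (fun _ => (1:ℝ)) measurable_const 1 (ae_of_all _ fun x => by norm_num)
  have hzero : Tendsto (fun θ => ((∫ x, (1:ℝ) * f θ x ∂μ) - ∫ x, (1:ℝ) * f θ₀ x ∂μ) / (θ - θ₀))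
      (𝓝[≠] θ₀) (𝓝 0) := by
    have hmemF : ∀ᶠ θ in 𝓝[≠] θ₀, θ ∈ Θ :=
      eventually_nhdsWithin_of_eventually_nhds (hΘ.eventually_mem hθ₀)
    refine Tendsto.congr' ?_ tendsto_const_nhds
    filter_upwards [hmemF] with θ hθ
    simp only [one_mul]
    rw [hf_prob θ hθ, hf_prob θ₀ hθ₀]
    simp
  have hD0 : ∫ x, D x * Real.sqrt (f θ₀ x) ∂μ = 0 := by
    have h := tendsto_nhds_unique h1t hzero
    simpa using h.symm
  -- basic integrability
  have hmeas0 : Measurable (f θ₀) := hf_meas.comp measurable_prodMk_left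
  have hint0 : Integrable (f θ₀) μ := by
    by_contra h
    have h1 := hf_prob θ₀ hθ₀
    rw [integral_undef h] at h1
    exact one_ne_zero h1.symm
  have hξ₀mem : MemLp (fun x => Real.sqrt (f θ₀ x)) 2 μ := by
    rw [memLp_two_iff_integrable_sq (hmeas0.sqrt.aestronglyMeasurable)]
    refine hint0.congr (Eventually.of_forall fun x => ?_)
    exact (Real.sq_sqrt (hf_nonneg θ₀ x)).symm
  set m : ℝ := ∫ y, T y * f θ₀ y ∂μ with hm
  have hTmmem : MemLp (fun x => (T x - m) * Real.sqrt (f θ₀ x)) 2 μ := by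
    refine hξ₀mem.of_le_mul (c := M + |m|)
      (((hT_meas.sub measurable_const).aestronglyMeasurable).mul hξ₀mem.1) ?_
    filter_upwards [hT] with x hx
    rw [norm_mul]
    refine mul_le_mul_of_nonneg_right ?_ (norm_nonneg _)
    rw [Real.norm_eq_abs]
    calc |T x - m| ≤ |T x| + |m| := abs_sub _ _
      _ ≤ M + |m| := add_le_add_left hx _
  have hTDmem : MemLp (fun x => T x * D x) 2 μ := by
    refine hD.of_le_mul (c := M) ((hT_meas.aestronglyMeasurable).mul hD.1) ?_
    filter_upwards [hT] with x hx
    rw [norm_mul]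
    exact mul_le_mul_of_nonneg_right (by rwa [Real.norm_eq_abs]) (norm_nonneg _)
  -- rewrite g with the centered statistic
  have hgid : g = 2 * ∫ x, ((T x - m) * Real.sqrt (f θ₀ x)) * D x ∂μ := by
    rw [hg]
    have i_a : Integrable (fun x => (T x * D x) * Real.sqrt (f θ₀ x)) μ :=
      my_int_mul hTDmem hξ₀mem
    have i_b : Integrable (fun x => m * (D x * Real.sqrt (f θ₀ x))) μ :=
      (my_int_mul hD hξ₀mem).const_mul m
    have hsplit : ∫ x, ((T x - m) * Real.sqrt (f θ₀ x)) * D x ∂μ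
        = ∫ x, ((T x * D x) * Real.sqrt (f θ₀ x) - m * (D x * Real.sqrt (f θ₀ x))) ∂μ := by
      refine integral_congr_ae (Eventually.of_forall fun x => ?_)
      beta_reduce
      ring
    rw [hsplit, integral_sub i_a i_b, integral_const_mul, hD0, mul_zero, sub_zero]
  -- Cauchy–Schwarz
  have hcs := my_cs hTmmem hD
  have hVeq : ∫ x, ((T x - m) * Real.sqrt (f θ₀ x)) ^ 2 ∂μ
      = ∫ x, (T x - m) ^ 2 * f θ₀ x ∂μ := by
    refine integral_congr_ae (Eventually.of_forall fun x => ?_)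
    beta_reduce
    rw [mul_pow, Real.sq_sqrt (hf_nonneg θ₀ x)]
  rw [hVeq] at hcs
  set V : ℝ := ∫ x, (T x - m) ^ 2 * f θ₀ x ∂μ with hV
  set I' : ℝ := ∫ x, D x ^ 2 ∂μ with hI'
  have hVnn : 0 ≤ V := integral_nonneg fun x => mul_nonneg (sq_nonneg _) (hf_nonneg θ₀ x)
  have hInn : 0 ≤ I' := integral_nonneg fun x => sq_nonneg _
  have hg2 : g ^ 2 ≤ 4 * V * I' := by
    have h1 : |g| ≤ 2 * (Real.sqrt V * Real.sqrt I') := by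
      rw [hgid, abs_mul, abs_two]
      exact mul_le_mul_of_nonneg_left hcs (by norm_num)
    have h2 : g ^ 2 ≤ (2 * (Real.sqrt V * Real.sqrt I')) ^ 2 := by
      rw [← sq_abs g]
      exact pow_le_pow_left₀ (abs_nonneg g) h1 2
    calc g ^ 2 ≤ (2 * (Real.sqrt V * Real.sqrt I')) ^ 2 := h2
      _ = 4 * (Real.sqrt V ^ 2 * Real.sqrt I' ^ 2) := by ring
      _ = 4 * V * I' := by rw [Real.sq_sqrt hVnn, Real.sq_sqrt hInn]; ring
  rw [ge_iff_le, div_le_iff₀ hI]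
  linarith
end

section
/- Integration by parts for nice functions on an open domain: let D ⊆ ℝ^d be open, f, g : D → ℝ nice on D with g continuous, ∫_D |fg| dm < ∞, ∫_D |∂_i f · g + f · ∂_i g| dm < ∞ for some coordinate i, and f(u)g(u) → 0 as u approaches any finite-norm boundary point of D along direction i. Then ∫_{D ∩ {g ≠ 0}} (∂_i f · g + f · ∂_i g) dm = 0. -/
open MeasureTheory Filter Topology Set

lemma lim_zero_atTop {φ : ℝ → ℝ} {c L : ℝ}
    (h : IntegrableOn φ (Set.Ioi c)) (hl : Tendsto φ atTop (𝓝 L)) : L = 0 := by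
  by_contra hL
  have habs : Tendsto (fun t => |φ t|) atTop (𝓝 |L|) := hl.abs
  have hev : ∀ᶠ t in atTop, |L| / 2 ≤ |φ t| :=
    habs.eventually (eventually_ge_nhds (by have := abs_pos.mpr hL; linarith))
  obtain ⟨M, hM⟩ := hev.exists_forall_of_atTop
  set M' := max M c with hM'
  have hsub : Set.Ioi M' ⊆ Set.Ioi c := Ioi_subset_Ioi (le_max_right _ _)
  have habs2 : IntegrableOn (fun t => |φ t|) (Set.Ioi c) := h.abs
  have hint : IntegrableOn (fun _ : ℝ => |L| / 2) (Set.Ioi M') := by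
    refine Integrable.mono' (habs2.mono_set hsub) aestronglyMeasurable_const ?_
    filter_upwards [ae_restrict_mem measurableSet_Ioi] with t ht
    have := hM t (le_of_lt (lt_of_le_of_lt (le_max_left M c) ht))
    simpa [abs_of_nonneg (by positivity : (0:ℝ) ≤ |L|/2)] using this
  rcases (integrable_const_iff).mp hint with h0 | hfin
  · exact hL (by simpa using abs_eq_zero.mp (by linarith [abs_nonneg L, (by linarith : |L|/2 = 0)]))
  · have := hfin.measure_univ_lt_top; simp [Real.volume_Ioi] at this

lemma lim_zero_atBot {φ : ℝ → ℝ} {c L : ℝ}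
    (h : IntegrableOn φ (Set.Iio c)) (hl : Tendsto φ atBot (𝓝 L)) : L = 0 := by
  by_contra hL
  have habs : Tendsto (fun t => |φ t|) atBot (𝓝 |L|) := hl.abs
  have hev : ∀ᶠ t in atBot, |L| / 2 ≤ |φ t| :=
    habs.eventually (eventually_ge_nhds (by have := abs_pos.mpr hL; linarith))
  obtain ⟨M, hM⟩ := hev.exists_forall_of_atBot
  set M' := min M c with hM'
  have hsub : Set.Iio M' ⊆ Set.Iio c := Iio_subset_Iio (min_le_right _ _)
  have habs2 : IntegrableOn (fun t => |φ t|) (Set.Iio c) := h.abs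
  have hint : IntegrableOn (fun _ : ℝ => |L| / 2) (Set.Iio M') := by
    refine Integrable.mono' (habs2.mono_set hsub) aestronglyMeasurable_const ?_
    filter_upwards [ae_restrict_mem measurableSet_Iio] with t ht
    have := hM t (le_of_lt (lt_of_lt_of_le ht (min_le_left M c)))
    simpa [abs_of_nonneg (by positivity : (0:ℝ) ≤ |L|/2)] using this
  rcases (integrable_const_iff).mp hint with h0 | hfin
  · exact hL (by simpa using abs_eq_zero.mp (by linarith [abs_nonneg L, (by linarith : |L|/2 = 0)]))
  · have := hfin.measure_univ_lt_top; simp [Real.volume_Iio] at this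

lemma fubini_tri (a b : ℝ) (hab : a ≤ b) (f g : ℝ → ℝ)
    (hfI : IntegrableOn f (Ioc a b)) (hgI : IntegrableOn g (Ioc a b)) :
    (∫ t in a..b, f t * (∫ s in a..t, g s)) + (∫ t in a..b, (∫ s in a..t, f s) * g t)
      = (∫ s in a..b, f s) * (∫ s in a..b, g s) := by
  set μ := volume.restrict (Ioc a b) with hμ
  have hprod : Integrable (fun q : ℝ × ℝ => f q.1 * g q.2) (μ.prod μ) := hfI.mul_prod hgI
  have hprod' : Integrable (fun q : ℝ × ℝ => g q.1 * f q.2) (μ.prod μ) := hgI.mul_prod hfI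
  have mset : MeasurableSet {q : ℝ × ℝ | q.2 ≤ q.1} := measurableSet_le measurable_snd measurable_fst
  have mset2 : MeasurableSet {q : ℝ × ℝ | q.1 ≤ q.2} := measurableSet_le measurable_fst measurable_snd
  set K₁ : ℝ × ℝ → ℝ := ({q : ℝ × ℝ | q.2 ≤ q.1}).indicator (fun q => f q.1 * g q.2) with hK₁
  set K₂ : ℝ × ℝ → ℝ := ({q : ℝ × ℝ | q.1 ≤ q.2}).indicator (fun q => f q.1 * g q.2) with hK₂
  set K₃ : ℝ × ℝ → ℝ := ({q : ℝ × ℝ | q.2 ≤ q.1}).indicator (fun q => f q.2 * g q.1) with hK₃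
  have hK₁i : Integrable K₁ (μ.prod μ) := hprod.indicator mset
  have hK₂i : Integrable K₂ (μ.prod μ) := hprod.indicator mset2
  have hK₃i : Integrable K₃ (μ.prod μ) := by
    have : K₃ = fun q : ℝ × ℝ => ({q : ℝ × ℝ | q.2 ≤ q.1}).indicator (fun q => g q.1 * f q.2) q := by
      funext q; simp only [hK₃, Set.indicator_apply]; split <;> ring_nf
    rw [this]; exact hprod'.indicator mset
  -- key slice computation
  have slice : ∀ t ∈ Ioc a b, ∀ h : ℝ → ℝ, IntegrableOn h (Ioc a b) →
      (∫ s, (Set.Iic t).indicator h s ∂μ) = ∫ s in a..t, h s := by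
    intro t ht h hh
    rw [integral_indicator measurableSet_Iic, hμ, Measure.restrict_restrict measurableSet_Iic]
    have : Set.Iic t ∩ Ioc a b = Ioc a t := by
      ext s; simp only [mem_inter_iff, mem_Iic, mem_Ioc]
      constructor
      · rintro ⟨h1, h2, h3⟩; exact ⟨h2, h1⟩
      · rintro ⟨h1, h2⟩; exact ⟨h2, h1, h2.trans ht.2⟩
    rw [this, intervalIntegral.integral_of_le ht.1.le]
  -- first double integral
  have E₁ : (∫ t in a..b, f t * (∫ s in a..t, g s)) = ∫ q, K₁ q ∂(μ.prod μ) := by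
    rw [intervalIntegral.integral_of_le hab, ← hμ]
    rw [← MeasureTheory.integral_integral (f := fun t s => K₁ (t, s)) hK₁i]
    refine integral_congr_ae ?_
    filter_upwards [ae_restrict_mem measurableSet_Ioc] with t ht
    have : (fun s => K₁ (t, s)) = fun s => (Set.Iic t).indicator (fun s => f t * g s) s := by
      funext s; simp only [hK₁, Set.indicator_apply, Set.mem_setOf_eq, Set.mem_Iic]
    rw [this, slice t ht (fun s => f t * g s) (hgI.const_mul (f t)),
      intervalIntegral.integral_const_mul]
  have E₂ : (∫ t in a..b, (∫ s in a..t, f s) * g t) = ∫ q, K₃ q ∂(μ.prod μ) := by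
    rw [intervalIntegral.integral_of_le hab, ← hμ]
    rw [← MeasureTheory.integral_integral (f := fun t s => K₃ (t, s)) hK₃i]
    refine integral_congr_ae ?_
    filter_upwards [ae_restrict_mem measurableSet_Ioc] with t ht
    have : (fun s => K₃ (t, s)) = fun s => (Set.Iic t).indicator (fun s => f s * g t) s := by
      funext s; simp only [hK₃, Set.indicator_apply, Set.mem_setOf_eq, Set.mem_Iic]
    rw [this, slice t ht (fun s => f s * g t) (hfI.mul_const (g t)),
      intervalIntegral.integral_mul_const]
  -- swap: ∫ K₃ = ∫ K₂
  have E₃ : ∫ q, K₃ q ∂(μ.prod μ) = ∫ q, K₂ q ∂(μ.prod μ) := by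
    have : ∀ q : ℝ × ℝ, K₃ q.swap = K₂ q := by
      intro q; simp only [hK₃, hK₂, Set.indicator_apply, Prod.swap, Set.mem_setOf_eq]
    rw [← MeasureTheory.integral_prod_swap K₃]
    exact integral_congr_ae (Filter.Eventually.of_forall fun q => this q)
  -- diagonal is null
  have hdiagm : MeasurableSet {q : ℝ × ℝ | q.1 = q.2} :=
    measurableSet_eq_fun measurable_fst measurable_snd
  have hdiag0 : (μ.prod μ) {q : ℝ × ℝ | q.1 = q.2} = 0 := by
    rw [Measure.prod_apply hdiagm]
    have : ∀ x : ℝ, μ (Prod.mk x ⁻¹' {q : ℝ × ℝ | q.1 = q.2}) = 0 := by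
      intro x
      have : Prod.mk x ⁻¹' {q : ℝ × ℝ | q.1 = q.2} = {x} := by
        ext y; simp [eq_comm]
      rw [this]
      exact le_antisymm (le_trans (Measure.restrict_le_self _) (by simp)) (by simp)
    simp [this]
  -- combine
  have key : (∫ q, K₁ q ∂(μ.prod μ)) + (∫ q, K₂ q ∂(μ.prod μ))
      = ∫ q : ℝ × ℝ, f q.1 * g q.2 ∂(μ.prod μ) := by
    rw [← integral_add hK₁i hK₂i]
    refine integral_congr_ae ?_
    have hae : ∀ᵐ q ∂(μ.prod μ), q ∉ {q : ℝ × ℝ | q.1 = q.2} :=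
      (ae_iff.mpr (by simpa using hdiag0))
    filter_upwards [hae] with q hq
    simp only [hK₁, hK₂, Set.indicator_apply, Set.mem_setOf_eq]
    rcases lt_trichotomy q.1 q.2 with h | h | h
    · rw [if_neg (not_le.mpr h), if_pos h.le]; ring
    · exact absurd h hq
    · rw [if_pos h.le, if_neg (not_le.mpr h)]; ring
  have final : ∫ q : ℝ × ℝ, f q.1 * g q.2 ∂(μ.prod μ) = (∫ s in a..b, f s) * (∫ s in a..b, g s) := by
    rw [integral_prod_mul, intervalIntegral.integral_of_le hab, intervalIntegral.integral_of_le hab]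
  rw [E₁, E₂, E₃, key, final]


lemma ftc_mul (a b : ℝ) (hab : a ≤ b) (F G f g : ℝ → ℝ)
    (hf : IntervalIntegrable f volume a b) (hg : IntervalIntegrable g volume a b)
    (hF : ∀ t ∈ Set.Icc a b, F t - F a = ∫ s in a..t, f s)
    (hG : ∀ t ∈ Set.Icc a b, G t - G a = ∫ s in a..t, g s) :
    IntervalIntegrable (fun t => f t * G t + F t * g t) volume a b ∧
      F b * G b - F a * G a = ∫ t in a..b, (f t * G t + F t * g t) := by
  have hfI : IntegrableOn f (Ioc a b) := (intervalIntegrable_iff_integrableOn_Ioc_of_le hab).mp hf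
  have hgI : IntegrableOn g (Ioc a b) := (intervalIntegrable_iff_integrableOn_Ioc_of_le hab).mp hg
  have hfIcc : IntegrableOn f (Icc a b) := (integrableOn_Icc_iff_integrableOn_Ioc).mpr hfI
  have hgIcc : IntegrableOn g (Icc a b) := (integrableOn_Icc_iff_integrableOn_Ioc).mpr hgI
  -- continuity of F and G on Icc
  have hFc : ContinuousOn F (Icc a b) := by
    have h1 := intervalIntegral.continuousOn_primitive (f := f) (a := a) (b := b) hfIcc
    have : ContinuousOn (fun x => F a + ∫ t in Ioc a x, f t) (Icc a b) :=
      continuousOn_const.add h1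
    refine this.congr fun x hx => ?_
    have := hF x hx
    rw [intervalIntegral.integral_of_le hx.1] at this
    linarith
  have hGc : ContinuousOn G (Icc a b) := by
    have h1 := intervalIntegral.continuousOn_primitive (f := g) (a := a) (b := b) hgIcc
    have : ContinuousOn (fun x => G a + ∫ t in Ioc a x, g t) (Icc a b) :=
      continuousOn_const.add h1
    refine this.congr fun x hx => ?_
    have := hG x hx
    rw [intervalIntegral.integral_of_le hx.1] at this
    linarith
  obtain ⟨CF, hCF⟩ := isCompact_Icc.exists_bound_of_continuousOn hFc
  obtain ⟨CG, hCG⟩ := isCompact_Icc.exists_bound_of_continuousOn hGc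
  have hFsm : AEStronglyMeasurable F (volume.restrict (Ioc a b)) :=
    (hFc.aestronglyMeasurable measurableSet_Icc).mono_measure
      (Measure.restrict_mono Ioc_subset_Icc_self le_rfl)
  have hGsm : AEStronglyMeasurable G (volume.restrict (Ioc a b)) :=
    (hGc.aestronglyMeasurable measurableSet_Icc).mono_measure
      (Measure.restrict_mono Ioc_subset_Icc_self le_rfl)
  -- integrability of the products
  have hfG : IntegrableOn (fun t => f t * G t) (Ioc a b) := by
    have : IntegrableOn (fun t => G t * f t) (Ioc a b) := by
      refine Integrable.bdd_mul (c := CG) hfI hGsm ?_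
      filter_upwards [ae_restrict_mem measurableSet_Ioc] with t ht
      simpa using hCG t (Ioc_subset_Icc_self ht)
    simpa [mul_comm] using this
  have hFg : IntegrableOn (fun t => F t * g t) (Ioc a b) := by
    refine Integrable.bdd_mul (c := CF) hgI hFsm ?_
    filter_upwards [ae_restrict_mem measurableSet_Ioc] with t ht
    simpa using hCF t (Ioc_subset_Icc_self ht)
  have hII : IntervalIntegrable (fun t => f t * G t + F t * g t) volume a b :=
    (intervalIntegrable_iff_integrableOn_Ioc_of_le hab).mpr (hfG.add hFg)
  refine ⟨hII, ?_⟩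
  -- identity part
  set Ab := ∫ s in a..b, f s with hAb
  set Bb := ∫ s in a..b, g s with hBb
  have hfB : IntervalIntegrable (fun t => f t * ∫ s in a..t, g s) volume a b := by
    rw [intervalIntegrable_iff_integrableOn_Ioc_of_le hab]
    refine (hfG.sub (hfI.mul_const (G a))).congr ?_
    filter_upwards [ae_restrict_mem measurableSet_Ioc] with t ht
    have := hG t (Ioc_subset_Icc_self ht)
    simp only [Pi.sub_apply]
    rw [← this]; ring
  have hAg : IntervalIntegrable (fun t => (∫ s in a..t, f s) * g t) volume a b := by
    rw [intervalIntegrable_iff_integrableOn_Ioc_of_le hab]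
    refine (hFg.sub (hgI.const_mul (F a))).congr ?_
    filter_upwards [ae_restrict_mem measurableSet_Ioc] with t ht
    have := hF t (Ioc_subset_Icc_self ht)
    simp only [Pi.sub_apply]
    rw [← this]; ring
  have split1 : (∫ t in a..b, f t * G t)
      = G a * Ab + ∫ t in a..b, f t * ∫ s in a..t, g s := by
    have e1 : (∫ t in a..b, f t * G t)
        = ∫ t in a..b, (f t * G a + f t * ∫ s in a..t, g s) := by
      refine intervalIntegral.integral_congr ?_
      intro t ht
      rw [uIcc_of_le hab] at ht
      have := hG t ht
      have hGt : G t = G a + ∫ s in a..t, g s := by linarith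
      simp only [hGt]; ring
    rw [e1, intervalIntegral.integral_add (hf.mul_const (G a)) hfB,
      intervalIntegral.integral_mul_const]
    ring
  have split2 : (∫ t in a..b, F t * g t)
      = F a * Bb + ∫ t in a..b, (∫ s in a..t, f s) * g t := by
    have e1 : (∫ t in a..b, F t * g t)
        = ∫ t in a..b, (F a * g t + (∫ s in a..t, f s) * g t) := by
      refine intervalIntegral.integral_congr ?_
      intro t ht
      rw [uIcc_of_le hab] at ht
      have := hF t ht
      have hFt : F t = F a + ∫ s in a..t, f s := by linarith
      simp only [hFt]; ring
    rw [e1, intervalIntegral.integral_add (hg.const_mul (F a)) hAg,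
      intervalIntegral.integral_const_mul]
  have hkey := fubini_tri a b hab f g hfI hgI
  have hsum : (∫ t in a..b, (f t * G t + F t * g t))
      = G a * Ab + F a * Bb + Ab * Bb := by
    rw [intervalIntegral.integral_add ((intervalIntegrable_iff_integrableOn_Ioc_of_le hab).mpr hfG)
      ((intervalIntegrable_iff_integrableOn_Ioc_of_le hab).mpr hFg), split1, split2]
    rw [← hAb, ← hBb] at hkey
    linarith
  have hFb : F b = F a + Ab := by have := hF b ⟨hab, le_rfl⟩; rw [← hAb] at this; linarith
  have hGb : G b = G a + Bb := by have := hG b ⟨hab, le_rfl⟩; rw [← hBb] at this; linarith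
  rw [hsum, hFb, hGb]; ring


section
variable {φ ψ : ℝ → ℝ}

lemma right_half (J : Set ℝ) (hJo : IsOpen J) (hJc : OrdConnected J) (c : ℝ) (hc : c ∈ J)
    (hψ : IntegrableOn ψ J) (hφ : IntegrableOn φ J)
    (hFTC : ∀ c₁ c₂ : ℝ, c₁ ≤ c₂ → Icc c₁ c₂ ⊆ J →
      IntervalIntegrable ψ volume c₁ c₂ ∧ φ c₂ - φ c₁ = ∫ t in c₁..c₂, ψ t)
    (hbd : ∀ t₀ ∈ frontier J, Tendsto φ (𝓝[J] t₀) (𝓝 0)) :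
    ∫ t in J ∩ Ioi c, ψ t = -φ c := by
  have hFTCt : ∀ t ∈ J, c ≤ t → φ t = φ c + ∫ s in c..t, ψ s := by
    intro t ht hct
    have := (hFTC c t hct (hJc.out hc ht)).2
    linarith
  by_cases hbdd : BddAbove J
  · -- bounded above component
    set b := sSup J with hb
    have hlub : IsLUB J b := isLUB_csSup ⟨c, hc⟩ hbdd
    have hbJ : b ∉ J := by
      intro hbJ
      obtain ⟨ε, hε, hsub⟩ := Metric.isOpen_iff.mp hJo b hbJ
      have : b + ε / 2 ∈ J := hsub (by simp [Real.dist_eq, abs_of_nonneg hε.le]; linarith)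
      have := hlub.1 this
      linarith
    have hcb : c < b := lt_of_le_of_ne (hlub.1 hc) (fun h => hbJ (h ▸ hc))
    have hJIoi : J ∩ Ioi c = Ioo c b := by
      ext x
      constructor
      · rintro ⟨hxJ, hxc⟩
        exact ⟨hxc, lt_of_le_of_ne (hlub.1 hxJ) (ne_of_mem_of_not_mem hxJ hbJ)⟩
      · rintro ⟨hxc, hxb⟩
        obtain ⟨y, hyJ, hxy⟩ := exists_lt_of_lt_csSup ⟨c, hc⟩ hxb
        exact ⟨hJc.out hc hyJ ⟨hxc.le, hxy.le⟩, hxc⟩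
    have hψIoo : IntegrableOn ψ (Ioo c b) :=
      hψ.mono_set (by rw [← hJIoi]; exact inter_subset_left)
    have hψIcc : IntegrableOn ψ (Icc c b) := by
      rw [integrableOn_Icc_iff_integrableOn_Ioc, integrableOn_Ioc_iff_integrableOn_Ioo]
      exact hψIoo
    set P : ℝ → ℝ := fun x => ∫ t in Ioc c x, ψ t with hP
    have hPc : ContinuousOn P (Icc c b) := intervalIntegral.continuousOn_primitive hψIcc
    have htendP : Tendsto P (𝓝[Ioo c b] b) (𝓝 (P b)) :=
      (hPc b (right_mem_Icc.mpr hcb.le)).mono_left (nhdsWithin_mono _ Ioo_subset_Icc_self)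
    have hbfr : b ∈ frontier J := by
      rw [hJo.frontier_eq]
      exact ⟨hlub.mem_closure ⟨c, hc⟩, hbJ⟩
    have htendφ : Tendsto φ (𝓝[Ioo c b] b) (𝓝 0) :=
      (hbd b hbfr).mono_left (nhdsWithin_mono _ (by rw [← hJIoi]; exact inter_subset_left))
    have hEq : ∀ᶠ t in 𝓝[Ioo c b] b, φ t = φ c + P t := by
      filter_upwards [eventually_mem_nhdsWithin] with t ht
      have htJ : t ∈ J := by rw [← hJIoi] at ht; exact ht.1
      rw [hFTCt t htJ (by rw [← hJIoi] at ht; exact ht.2.le), hP,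
        intervalIntegral.integral_of_le (by rw [← hJIoi] at ht; exact ht.2.le)]
    haveI := right_nhdsWithin_Ioo_neBot hcb
    have htendφ' : Tendsto φ (𝓝[Ioo c b] b) (𝓝 (φ c + P b)) :=
      (tendsto_const_nhds.add htendP).congr' (by filter_upwards [hEq] with t ht; exact ht.symm)
    have h0 : φ c + P b = 0 := tendsto_nhds_unique htendφ' htendφ
    calc ∫ t in J ∩ Ioi c, ψ t = ∫ t in Ioo c b, ψ t := by rw [hJIoi]
      _ = ∫ t in Ioc c b, ψ t := setIntegral_congr_set Ioo_ae_eq_Ioc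
      _ = -φ c := by rw [← hP] at *; linarith
  · -- unbounded above
    have hJIoi : J ∩ Ioi c = Ioi c := by
      apply Set.eq_of_subset_of_subset inter_subset_right
      intro x hx
      obtain ⟨y, hyJ, hxy⟩ := not_bddAbove_iff.mp hbdd x
      exact ⟨hJc.out hc hyJ ⟨hx.le, hxy.le⟩, hx⟩
    have hIoisub : Ioi c ⊆ J := by rw [← hJIoi]; exact inter_subset_left
    have hψIoi : IntegrableOn ψ (Ioi c) := hψ.mono_set hIoisub
    have htendP : Tendsto (fun t => ∫ s in c..t, ψ s) atTop (𝓝 (∫ s in Ioi c, ψ s)) :=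
      intervalIntegral_tendsto_integral_Ioi c hψIoi tendsto_id
    have hEq : ∀ᶠ t in atTop, φ t = φ c + ∫ s in c..t, ψ s := by
      filter_upwards [eventually_ge_atTop c] with t hct
      rcases hct.lt_or_eq with h | h
      · exact hFTCt t (hIoisub h) hct
      · simp [← h]
    have htendφ : Tendsto φ atTop (𝓝 (φ c + ∫ s in Ioi c, ψ s)) :=
      (tendsto_const_nhds.add htendP).congr' (by filter_upwards [hEq] with t ht; exact ht.symm)
    have h0 : φ c + ∫ s in Ioi c, ψ s = 0 := lim_zero_atTop (hφ.mono_set hIoisub) htendφ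
    rw [hJIoi]
    linarith

lemma left_half (J : Set ℝ) (hJo : IsOpen J) (hJc : OrdConnected J) (c : ℝ) (hc : c ∈ J)
    (hψ : IntegrableOn ψ J) (hφ : IntegrableOn φ J)
    (hFTC : ∀ c₁ c₂ : ℝ, c₁ ≤ c₂ → Icc c₁ c₂ ⊆ J →
      IntervalIntegrable ψ volume c₁ c₂ ∧ φ c₂ - φ c₁ = ∫ t in c₁..c₂, ψ t)
    (hbd : ∀ t₀ ∈ frontier J, Tendsto φ (𝓝[J] t₀) (𝓝 0)) :
    ∫ t in J ∩ Iio c, ψ t = φ c := by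
  have hFTCt : ∀ t ∈ J, t ≤ c → φ t = φ c - ∫ s in t..c, ψ s := by
    intro t ht htc
    have := (hFTC t c htc (hJc.out ht hc)).2
    linarith
  by_cases hbdd : BddBelow J
  · -- bounded below component
    set a := sInf J with ha
    have hglb : IsGLB J a := isGLB_csInf ⟨c, hc⟩ hbdd
    have haJ : a ∉ J := by
      intro haJ
      obtain ⟨ε, hε, hsub⟩ := Metric.isOpen_iff.mp hJo a haJ
      have : a - ε / 2 ∈ J := hsub (by simp [Real.dist_eq, abs_of_nonneg hε.le]; linarith)
      have := hglb.1 this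
      linarith
    have hac : a < c := lt_of_le_of_ne (hglb.1 hc) (fun h => haJ (h ▸ hc))
    have hJIio : J ∩ Iio c = Ioo a c := by
      ext x
      constructor
      · rintro ⟨hxJ, hxc⟩
        exact ⟨lt_of_le_of_ne (hglb.1 hxJ) (ne_of_mem_of_not_mem hxJ haJ).symm, hxc⟩
      · rintro ⟨hxa, hxc⟩
        obtain ⟨y, hyJ, hyx⟩ := exists_lt_of_csInf_lt ⟨c, hc⟩ hxa
        exact ⟨hJc.out hyJ hc ⟨hyx.le, hxc.le⟩, hxc⟩
    have hψIoo : IntegrableOn ψ (Ioo a c) :=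
      hψ.mono_set (by rw [← hJIio]; exact inter_subset_left)
    have hψIcc : IntegrableOn ψ (Icc a c) := by
      rw [integrableOn_Icc_iff_integrableOn_Ioc, integrableOn_Ioc_iff_integrableOn_Ioo]
      exact hψIoo
    set P : ℝ → ℝ := fun x => ∫ t in Ioc a x, ψ t with hP
    have hPc : ContinuousOn P (Icc a c) := intervalIntegral.continuousOn_primitive hψIcc
    have htendP : Tendsto P (𝓝[Ioo a c] a) (𝓝 (P a)) :=
      (hPc a (left_mem_Icc.mpr hac.le)).mono_left (nhdsWithin_mono _ Ioo_subset_Icc_self)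
    have hPa : P a = 0 := by simp [hP]
    have hsplit : ∀ t ∈ Ioo a c, (∫ s in t..c, ψ s) = P c - P t := by
      intro t ht
      have h1 : Ioc a t ∪ Ioc t c = Ioc a c := Ioc_union_Ioc_eq_Ioc ht.1.le ht.2.le
      have h2 : Disjoint (Ioc a t) (Ioc t c) := by
        rw [Set.disjoint_left]
        rintro x ⟨_, hx2⟩ ⟨hx3, _⟩
        exact absurd hx3 (not_lt.mpr hx2)
      have h3 := setIntegral_union h2 measurableSet_Ioc
        (hψIcc.mono_set (Ioc_subset_Icc_self.trans (Icc_subset_Icc le_rfl ht.2.le)))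
        (hψIcc.mono_set (Ioc_subset_Icc_self.trans (Icc_subset_Icc ht.1.le le_rfl)))
      rw [h1] at h3
      rw [intervalIntegral.integral_of_le ht.2.le, hP]
      simp only at h3 ⊢
      linarith
    have hafr : a ∈ frontier J := by
      rw [hJo.frontier_eq]
      exact ⟨hglb.mem_closure ⟨c, hc⟩, haJ⟩
    have htendφ : Tendsto φ (𝓝[Ioo a c] a) (𝓝 0) :=
      (hbd a hafr).mono_left (nhdsWithin_mono _ (by rw [← hJIio]; exact inter_subset_left))
    have hEq : ∀ᶠ t in 𝓝[Ioo a c] a, φ t = φ c - P c + P t := by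
      filter_upwards [eventually_mem_nhdsWithin] with t ht
      have htJ : t ∈ J := by rw [← hJIio] at ht; exact ht.1
      rw [hFTCt t htJ ht.2.le, hsplit t ht]
      ring
    haveI := left_nhdsWithin_Ioo_neBot hac
    have htendφ' : Tendsto φ (𝓝[Ioo a c] a) (𝓝 (φ c - P c + P a)) :=
      (tendsto_const_nhds.add htendP).congr' (by filter_upwards [hEq] with t ht; exact ht.symm)
    have h0 : φ c - P c + P a = 0 := tendsto_nhds_unique htendφ' htendφ
    calc ∫ t in J ∩ Iio c, ψ t = ∫ t in Ioo a c, ψ t := by rw [hJIio]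
      _ = ∫ t in Ioc a c, ψ t := setIntegral_congr_set Ioo_ae_eq_Ioc
      _ = φ c := by rw [← hP] at *; linarith [hPa]
  · -- unbounded below
    have hJIio : J ∩ Iio c = Iio c := by
      apply Set.eq_of_subset_of_subset inter_subset_right
      intro x hx
      obtain ⟨y, hyJ, hyx⟩ := not_bddBelow_iff.mp hbdd x
      exact ⟨hJc.out hyJ hc ⟨hyx.le, hx.le⟩, hx⟩
    have hIiosub : Iio c ⊆ J := by rw [← hJIio]; exact inter_subset_left
    have hIicsub : Iic c ⊆ J := by
      intro x hx
      rcases lt_or_eq_of_le (mem_Iic.mp hx) with h | h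
      · exact hIiosub h
      · rwa [h]
    have hψIic : IntegrableOn ψ (Iic c) := hψ.mono_set hIicsub
    have htendP : Tendsto (fun t => ∫ s in t..c, ψ s) atBot (𝓝 (∫ s in Iic c, ψ s)) :=
      intervalIntegral_tendsto_integral_Iic c hψIic tendsto_id
    have hEq : ∀ᶠ t in atBot, φ t = φ c - ∫ s in t..c, ψ s := by
      filter_upwards [eventually_le_atBot c] with t htc
      exact hFTCt t (hIicsub htc) htc
    have htendφ : Tendsto φ atBot (𝓝 (φ c - ∫ s in Iic c, ψ s)) :=
      (tendsto_const_nhds.sub htendP).congr' (by filter_upwards [hEq] with t ht; exact ht.symm)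
    have h0 : φ c - ∫ s in Iic c, ψ s = 0 := lim_zero_atBot (hφ.mono_set hIiosub) htendφ
    calc ∫ t in J ∩ Iio c, ψ t = ∫ t in Iio c, ψ t := by rw [hJIio]
      _ = ∫ t in Iic c, ψ t := setIntegral_congr_set Iio_ae_eq_Iic
      _ = φ c := by linarith

lemma comp_zero (J : Set ℝ) (hJo : IsOpen J) (hJc : OrdConnected J) (c : ℝ) (hc : c ∈ J)
    (hψ : IntegrableOn ψ J) (hφ : IntegrableOn φ J)
    (hFTC : ∀ c₁ c₂ : ℝ, c₁ ≤ c₂ → Icc c₁ c₂ ⊆ J →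
      IntervalIntegrable ψ volume c₁ c₂ ∧ φ c₂ - φ c₁ = ∫ t in c₁..c₂, ψ t)
    (hbd : ∀ t₀ ∈ frontier J, Tendsto φ (𝓝[J] t₀) (𝓝 0)) :
    ∫ t in J, ψ t = 0 := by
  have hsplit : J = (J ∩ Iio c) ∪ (J ∩ Ici c) := by
    rw [← Set.inter_union_distrib_left, Iio_union_Ici, Set.inter_univ]
  have hdisj : Disjoint (J ∩ Iio c) (J ∩ Ici c) := by
    refine Disjoint.mono inter_subset_right inter_subset_right ?_
    rw [Set.disjoint_left]
    intro x hx1 hx2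
    exact absurd (mem_Ici.mp hx2) (not_le.mpr hx1)
  have h1 : ∫ t in J, ψ t = (∫ t in J ∩ Iio c, ψ t) + ∫ t in J ∩ Ici c, ψ t := by
    rw [hsplit] at hψ
    nth_rewrite 1 [hsplit]
    exact setIntegral_union hdisj (hJo.measurableSet.inter measurableSet_Ici)
      (hψ.mono_set subset_union_left) (hψ.mono_set subset_union_right)
  have h2 : ∫ t in J ∩ Ici c, ψ t = ∫ t in J ∩ Ioi c, ψ t := by
    apply setIntegral_congr_set
    refine Filter.EventuallyEq.inter (Filter.EventuallyEq.refl _ _) ?_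
    exact (Ioi_ae_eq_Ici (μ := volume) (a := c)).symm
  rw [h1, h2, right_half J hJo hJc c hc hψ hφ hFTC hbd,
    left_half J hJo hJc c hc hψ hφ hFTC hbd]
  ring

lemma frontier_comp_subset {U : Set ℝ} (hUo : IsOpen U) {t : ℝ} (ht : t ∈ U) :
    frontier (connectedComponentIn U t) ⊆ frontier U := by
  intro x hx
  set J := connectedComponentIn U t with hJ
  have hJo : IsOpen J := hUo.connectedComponentIn
  rw [hJo.frontier_eq] at hx
  obtain ⟨hxc, hxJ⟩ := hx
  rw [hUo.frontier_eq]
  refine ⟨closure_mono (connectedComponentIn_subset _ _) hxc, fun hxU => ?_⟩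
  set C := connectedComponentIn U x with hC
  have hCo : IsOpen C := hUo.connectedComponentIn
  have hxC : x ∈ C := mem_connectedComponentIn hxU
  obtain ⟨z, hzC, hzJ⟩ := _root_.mem_closure_iff.mp hxc C hCo hxC
  have h1 : J = connectedComponentIn U z := connectedComponentIn_eq hzJ
  have h2 : C = connectedComponentIn U z := connectedComponentIn_eq hzC
  exact hxJ (by rw [show J = C from h2 ▸ h1]; exact hxC)

lemma key1d (U : Set ℝ) (hUo : IsOpen U) (φ ψ : ℝ → ℝ)
    (hψ : IntegrableOn ψ U) (hφ : IntegrableOn φ U)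
    (hFTC : ∀ c₁ c₂ : ℝ, c₁ ≤ c₂ → Icc c₁ c₂ ⊆ U →
      IntervalIntegrable ψ volume c₁ c₂ ∧ φ c₂ - φ c₁ = ∫ t in c₁..c₂, ψ t)
    (hbd : ∀ t₀ ∈ frontier U, Tendsto φ (𝓝[U] t₀) (𝓝 0)) :
    ∫ t in U, ψ t = 0 := by
  set S : Set (Set ℝ) := (fun t => connectedComponentIn U t) '' U with hS
  have hpd : S.PairwiseDisjoint id := by
    rintro J ⟨x, hx, rfl⟩ J' ⟨y, hy, rfl⟩ hne
    refine Set.disjoint_left.mpr fun z hzJ hzJ' => hne ?_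
    simp only [id] at hzJ hzJ'
    simp only []
    rw [connectedComponentIn_eq hzJ, connectedComponentIn_eq hzJ']
  have hScnt : S.Countable :=
    hpd.countable_of_isOpen (fun J hJ => by obtain ⟨x, _, rfl⟩ := hJ; exact hUo.connectedComponentIn)
      (fun J hJ => by obtain ⟨x, hx, rfl⟩ := hJ; exact ⟨x, mem_connectedComponentIn hx⟩)
  have hcover : ⋃₀ S = U := by
    apply Set.eq_of_subset_of_subset
    · rintro x ⟨J, ⟨y, hy, rfl⟩, hxJ⟩
      exact connectedComponentIn_subset U y hxJ
    · intro x hx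
      exact ⟨connectedComponentIn U x, ⟨x, hx, rfl⟩, mem_connectedComponentIn hx⟩
  haveI := hScnt.to_subtype
  have hU' : U = ⋃ (J : S), (J : Set ℝ) := by rw [← hcover, sUnion_eq_iUnion]
  have hmeas : ∀ J : S, MeasurableSet (J : Set ℝ) := by
    rintro ⟨J, hJ⟩
    obtain ⟨x, _, rfl⟩ := hJ
    exact hUo.connectedComponentIn.measurableSet
  have hdisj : Pairwise (Function.onFun Disjoint fun J : S => (J : Set ℝ)) := by
    rintro ⟨J, hJ⟩ ⟨J', hJ'⟩ hne
    exact hpd hJ hJ' (fun h => hne (Subtype.ext h))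
  have hint : IntegrableOn ψ (⋃ (J : S), (J : Set ℝ)) := by rw [← hU']; exact hψ
  have hzero : ∀ J : S, ∫ t in (J : Set ℝ), ψ t = 0 := by
    rintro ⟨J, hJ⟩
    obtain ⟨x, hx, rfl⟩ := hJ
    have hJo : IsOpen (connectedComponentIn U x) := hUo.connectedComponentIn
    have hJc : OrdConnected (connectedComponentIn U x) :=
      (isPreconnected_connectedComponentIn).ordConnected
    have hsub := connectedComponentIn_subset U x
    refine comp_zero _ hJo hJc x (mem_connectedComponentIn hx) (hψ.mono_set hsub)
      (hφ.mono_set hsub) (fun c₁ c₂ h hsub' => hFTC c₁ c₂ h (hsub'.trans hsub)) ?_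
    intro t₀ ht₀
    exact (hbd t₀ (frontier_comp_subset hUo hx ht₀)).mono_left (nhdsWithin_mono _ hsub)
  rw [hU', integral_iUnion hmeas hdisj hint]
  simp [hzero]

end

variable {n : ℕ}

lemma update_insertNth (i : Fin (n + 1)) (w : Fin n → ℝ) (t s : ℝ) :
    Function.update (i.insertNth (α := fun _ => ℝ) t w) i s = i.insertNth s w := by
  funext j
  rcases eq_or_ne j i with rfl | hj
  · simp
  · obtain ⟨k, rfl⟩ := Fin.exists_succAbove_eq hj
    rw [Function.update_of_ne (Fin.succAbove_ne i k)]
    simp [Fin.insertNth_apply_succAbove]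

lemma cont_insertNth (i : Fin (n + 1)) (w : Fin n → ℝ) :
    Continuous (fun t : ℝ => i.insertNth (α := fun _ => ℝ) t w) := by
  refine continuous_pi fun j => ?_
  rcases eq_or_ne j i with rfl | hj
  · simpa using continuous_id'
  · obtain ⟨k, rfl⟩ := Fin.exists_succAbove_eq hj
    simpa [Fin.insertNth_apply_succAbove] using continuous_const

example (i : Fin (n + 1)) (t : ℝ) (w : Fin n → ℝ) :
    (MeasurableEquiv.piFinSuccAbove (fun _ : Fin (n+1) => ℝ) i).symm (t, w) = i.insertNth t w := rfl

lemma contOn_of_rep (a b : ℝ) (F f : ℝ → ℝ) (hfI : IntegrableOn f (Icc a b))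
    (hF : ∀ t ∈ Icc a b, F t - F a = ∫ s in a..t, f s) : ContinuousOn F (Icc a b) := by
  have h1 := intervalIntegral.continuousOn_primitive (f := f) (a := a) (b := b) hfI
  have : ContinuousOn (fun x => F a + ∫ t in Ioc a x, f t) (Icc a b) :=
    continuousOn_const.add h1
  refine this.congr fun x hx => ?_
  have := hF x hx
  rw [intervalIntegral.integral_of_le hx.1] at this
  linarith


/-- integration by parts for nice functions on an open domain:
let `D ⊆ ℝ^d` be open, `f, g : D → ℝ` nice along the `i`-th coordinate (a.e. slices
absolutely continuous with partial derivatives `f'`, `g'`), with `g` continuous,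
`∫_D |fg| dm < ∞`, `∫_D |∂ᵢf·g + f·∂ᵢg| dm < ∞`, and `f(u)g(u) → 0` as `u` approaches
any boundary point of `D` along the `i`-th canonical direction. Then
`∫_{D ∩ {g ≠ 0}} (∂ᵢf·g + f·∂ᵢg) dm = 0`. -/
theorem stmt_15 (d : ℕ) (hd : 2 ≤ d)
    (D : Set (Fin d → ℝ)) (hD : IsOpen D)
    (f f' g g' : (Fin d → ℝ) → ℝ) (i : Fin d)
    (hf_meas : Measurable f) (hf'_meas : Measurable f')
    (hg'_meas : Measurable g')
    (hg_cont : ContinuousOn g D)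
    -- niceness of f along coordinate i: a.e. slices absolutely continuous on the slice
    -- of D, with a.e. derivative the slice of f'
    (hf_slice : ∀ᵐ u ∂(volume : Measure (Fin d → ℝ)), ∀ c₁ c₂ : ℝ, c₁ ≤ c₂ →
      (∀ t ∈ Set.Icc c₁ c₂, Function.update u i t ∈ D) →
      IntervalIntegrable (fun t => f' (Function.update u i t)) volume c₁ c₂ ∧
      f (Function.update u i c₂) - f (Function.update u i c₁)
        = ∫ t in c₁..c₂, f' (Function.update u i t))
    -- niceness of g along coordinate i
    (hg_slice : ∀ᵐ u ∂(volume : Measure (Fin d → ℝ)), ∀ c₁ c₂ : ℝ, c₁ ≤ c₂ →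
      (∀ t ∈ Set.Icc c₁ c₂, Function.update u i t ∈ D) →
      IntervalIntegrable (fun t => g' (Function.update u i t)) volume c₁ c₂ ∧
      g (Function.update u i c₂) - g (Function.update u i c₁)
        = ∫ t in c₁..c₂, g' (Function.update u i t))
    -- integrability assumptions
    (hint1 : IntegrableOn (fun u => f u * g u) D volume)
    (hint2 : IntegrableOn (fun u => f' u * g u + f u * g' u) D volume)
    -- boundary condition: f·g tends to 0 at the boundary of D along direction i
    (hbdD : ∀ u : Fin d → ℝ, ∀ t₀ : ℝ, Function.update u i t₀ ∈ frontier D →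
      Tendsto (fun t => f (Function.update u i t) * g (Function.update u i t))
        (𝓝[{t | Function.update u i t ∈ D}] t₀) (𝓝 0)) :
    ∫ u in D ∩ {u | g u ≠ 0}, (f' u * g u + f u * g' u) = 0 := by
  obtain ⟨n, rfl⟩ : ∃ n, d = n + 1 := ⟨d - 1, by omega⟩
  clear hd
  set S : Set (Fin (n+1) → ℝ) := D ∩ {u | g u ≠ 0} with hSdef
  have hSopen : IsOpen S := by
    have hEq : S = D ∩ g ⁻¹' ({0}ᶜ) := by ext u; simp [hSdef]
    rw [hEq]
    exact hg_cont.isOpen_inter_preimage hD isOpen_compl_singleton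
  have hSmeas : MeasurableSet S := hSopen.measurableSet
  have hSD : S ⊆ D := inter_subset_left
  set H : (Fin (n+1) → ℝ) → ℝ := fun u => f' u * g u + f u * g' u with hHdef
  set FG : (Fin (n+1) → ℝ) → ℝ := fun u => f u * g u with hFGdef
  have hHS : IntegrableOn H S := hint2.mono_set hSD
  have hFGS : IntegrableOn FG S := hint1.mono_set hSD
  set e := MeasurableEquiv.piFinSuccAbove (fun _ : Fin (n+1) => ℝ) i with he
  have mp : MeasurePreserving e volume volume := volume_preserving_piFinSuccAbove _ i
  have mps : MeasurePreserving e.symm volume volume := mp.symm e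
  set slc : (Fin n → ℝ) → ℝ → (Fin (n+1) → ℝ) := fun w t => i.insertNth t w with hslc
  -- transfer integrability to the product space
  have hIndH : Integrable (S.indicator H) volume := (integrable_indicator_iff hSmeas).mpr hHS
  have hIndFG : Integrable (S.indicator FG) volume := (integrable_indicator_iff hSmeas).mpr hFGS
  have hcompH : Integrable (fun p : ℝ × (Fin n → ℝ) => S.indicator H (e.symm p)) volume := by
    have h2 := integrable_map_equiv (μ := (volume : Measure (ℝ × (Fin n → ℝ))))
      e.symm (S.indicator H)
    rw [mps.map_eq] at h2
    exact h2.mp hIndH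
  have hcompFG : Integrable (fun p : ℝ × (Fin n → ℝ) => S.indicator FG (e.symm p)) volume := by
    have h2 := integrable_map_equiv (μ := (volume : Measure (ℝ × (Fin n → ℝ))))
      e.symm (S.indicator FG)
    rw [mps.map_eq] at h2
    exact h2.mp hIndFG
  -- transfer a.e. statements
  have transfer : ∀ (P : (Fin (n+1) → ℝ) → Prop),
      (∀ᵐ u ∂(volume : Measure (Fin (n+1) → ℝ)), P u) →
      ∀ᵐ t ∂(volume : Measure ℝ), ∀ᵐ w ∂(volume : Measure (Fin n → ℝ)), P (slc w t) := by
    intro P hP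
    rw [← mps.map_eq] at hP
    have h2 : ∀ᵐ p ∂(volume : Measure (ℝ × (Fin n → ℝ))), P (e.symm p) :=
      ae_of_ae_map e.symm.measurable.aemeasurable hP
    rw [Measure.volume_eq_prod ℝ (Fin n → ℝ)] at h2
    exact Measure.ae_ae_of_ae_prod h2
  have hfae := transfer _ hf_slice
  have hgae := transfer _ hg_slice
  haveI : NeBot (ae (volume : Measure ℝ)) := by
    refine ae_neBot.mpr fun h => ?_
    have := congrArg (fun m : Measure ℝ => m (Set.Ioo 0 1)) h
    simp [Real.volume_Ioo] at this
  obtain ⟨t₀, hft₀, hgt₀⟩ := (hfae.and hgae).exists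
  -- a.e. slice integrability
  have hHae : ∀ᵐ w ∂(volume : Measure (Fin n → ℝ)),
      Integrable (fun t => S.indicator H (slc w t)) volume := by
    have h2 := hcompH; rw [Measure.volume_eq_prod ℝ (Fin n → ℝ)] at h2
    exact h2.prod_left_ae
  have hFGae : ∀ᵐ w ∂(volume : Measure (Fin n → ℝ)),
      Integrable (fun t => S.indicator FG (slc w t)) volume := by
    have h2 := hcompFG; rw [Measure.volume_eq_prod ℝ (Fin n → ℝ)] at h2
    exact h2.prod_left_ae
  -- the main a.e. vanishing of slice integrals
  have main : ∀ᵐ w ∂(volume : Measure (Fin n → ℝ)),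
      (∫ t : ℝ, S.indicator H (slc w t)) = 0 := by
    filter_upwards [hft₀, hgt₀, hHae, hFGae] with w hfw hgw hHw hFGw
    have hrw : ∀ t s : ℝ, Function.update (slc w t) i s = slc w s :=
      fun t s => update_insertNth i w t s
    simp only [hrw] at hfw hgw
    set Uw : Set ℝ := {t : ℝ | slc w t ∈ S} with hUwdef
    set Vw : Set ℝ := {t : ℝ | slc w t ∈ D} with hVwdef
    have hUo : IsOpen Uw := hSopen.preimage (cont_insertNth i w)
    have hVo : IsOpen Vw := hD.preimage (cont_insertNth i w)
    have hUV : Uw ⊆ Vw := fun t ht => ht.1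
    have hind : (fun t => S.indicator H (slc w t)) = Uw.indicator (fun t => H (slc w t)) := by
      funext t
      by_cases h : slc w t ∈ S
      · rw [Set.indicator_of_mem h, Set.indicator_of_mem (by exact h)]
      · rw [Set.indicator_of_notMem h, Set.indicator_of_notMem (by exact h)]
    have hindFG : (fun t => S.indicator FG (slc w t)) = Uw.indicator (fun t => FG (slc w t)) := by
      funext t
      by_cases h : slc w t ∈ S
      · rw [Set.indicator_of_mem h, Set.indicator_of_mem (by exact h)]
      · rw [Set.indicator_of_notMem h, Set.indicator_of_notMem (by exact h)]
    rw [hind, integral_indicator hUo.measurableSet]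
    have hsubD : ∀ {c₁ c₂ : ℝ}, Icc c₁ c₂ ⊆ Vw → ∀ t ∈ Icc c₁ c₂, i.insertNth t w ∈ D :=
      fun hsub t ht => hsub ht
    -- FTC reps
    have hFrep : ∀ {c₁ c₂ : ℝ}, c₁ ≤ c₂ → Icc c₁ c₂ ⊆ Vw →
        ∀ t ∈ Icc c₁ c₂, f (slc w t) - f (slc w c₁) = ∫ s in c₁..t, f' (slc w s) :=
      fun {c₁ c₂} hle hsub t ht =>
        (hfw c₁ t ht.1 (fun s hs => hsubD hsub s ⟨hs.1, hs.2.trans ht.2⟩)).2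
    have hGrep : ∀ {c₁ c₂ : ℝ}, c₁ ≤ c₂ → Icc c₁ c₂ ⊆ Vw →
        ∀ t ∈ Icc c₁ c₂, g (slc w t) - g (slc w c₁) = ∫ s in c₁..t, g' (slc w s) :=
      fun {c₁ c₂} hle hsub t ht =>
        (hgw c₁ t ht.1 (fun s hs => hsubD hsub s ⟨hs.1, hs.2.trans ht.2⟩)).2
    have hFTCmul : ∀ c₁ c₂ : ℝ, c₁ ≤ c₂ → Icc c₁ c₂ ⊆ Vw →
        IntervalIntegrable (fun t => H (slc w t)) volume c₁ c₂ ∧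
        (fun t => FG (slc w t)) c₂ - (fun t => FG (slc w t)) c₁
          = ∫ t in c₁..c₂, H (slc w t) := by
      intro c₁ c₂ hle hsub
      have Hf := hfw c₁ c₂ hle (hsubD hsub)
      have Hg := hgw c₁ c₂ hle (hsubD hsub)
      exact ftc_mul c₁ c₂ hle (fun t => f (slc w t)) (fun t => g (slc w t))
        (fun t => f' (slc w t)) (fun t => g' (slc w t)) Hf.1 Hg.1
        (hFrep hle hsub) (hGrep hle hsub)
    -- apply the 1D statement
    refine key1d Uw hUo (fun t => FG (slc w t)) (fun t => H (slc w t)) ?_ ?_ ?_ ?_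
    · rw [hind] at hHw
      exact (integrable_indicator_iff hUo.measurableSet).mp hHw
    · rw [hindFG] at hFGw
      exact (integrable_indicator_iff hUo.measurableSet).mp hFGw
    · intro c₁ c₂ hle hsub
      exact hFTCmul c₁ c₂ hle (hsub.trans hUV)
    · -- boundary behaviour
      intro t₁ ht₁
      have hclU : t₁ ∈ closure Uw := ht₁.1
      have hclS : slc w t₁ ∈ closure S :=
        (cont_insertNth i w).closure_preimage_subset S hclU
      by_cases hρ : slc w t₁ ∈ D
      · -- interior case : g vanishes there
        have ht₁U : t₁ ∉ Uw := by
          rw [hUo.frontier_eq] at ht₁; exact ht₁.2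
        have hg0 : g (slc w t₁) = 0 := by
          by_contra hg0
          exact ht₁U ⟨hρ, hg0⟩
        obtain ⟨ε, hε, hball⟩ := Metric.isOpen_iff.mp hVo t₁ hρ
        set c₁ := t₁ - ε/2 with hc₁
        set c₂ := t₁ + ε/2 with hc₂
        have hle : c₁ ≤ c₂ := by rw [hc₁, hc₂]; linarith
        have hIccV : Icc c₁ c₂ ⊆ Vw := by
          intro x hx
          apply hball
          rw [Metric.mem_ball, Real.dist_eq]
          rw [abs_sub_lt_iff]
          simp only [hc₁, hc₂] at hx
          rcases hx with ⟨h1, h2⟩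
          constructor <;> linarith
        have Hf := hfw c₁ c₂ hle (hsubD hIccV)
        have Hg := hgw c₁ c₂ hle (hsubD hIccV)
        have hf'Icc : IntegrableOn (fun t => f' (slc w t)) (Icc c₁ c₂) :=
          (integrableOn_Icc_iff_integrableOn_Ioc).mpr
            ((intervalIntegrable_iff_integrableOn_Ioc_of_le hle).mp Hf.1)
        have hg'Icc : IntegrableOn (fun t => g' (slc w t)) (Icc c₁ c₂) :=
          (integrableOn_Icc_iff_integrableOn_Ioc).mpr
            ((intervalIntegrable_iff_integrableOn_Ioc_of_le hle).mp Hg.1)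
        have hfc : ContinuousOn (fun t => f (slc w t)) (Icc c₁ c₂) :=
          contOn_of_rep c₁ c₂ _ _ hf'Icc (hFrep hle hIccV)
        have hgc : ContinuousOn (fun t => g (slc w t)) (Icc c₁ c₂) :=
          contOn_of_rep c₁ c₂ _ _ hg'Icc (hGrep hle hIccV)
        have ht₁mem : Icc c₁ c₂ ∈ 𝓝 t₁ :=
          Icc_mem_nhds (by rw [hc₁]; linarith) (by rw [hc₂]; linarith)
        have hcont : ContinuousAt (fun t => FG (slc w t)) t₁ :=
          ContinuousOn.continuousAt (hfc.mul hgc) ht₁mem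
        have htend : Tendsto (fun t => FG (slc w t)) (𝓝 t₁) (𝓝 0) := by
          have := hcont.tendsto
          simpa [hFGdef, hg0] using this
        exact htend.mono_left nhdsWithin_le_nhds
      · -- frontier case
        have hfr : slc w t₁ ∈ frontier D := by
          have hmem : slc w t₁ ∈ closure D \ D := ⟨closure_mono hSD hclS, hρ⟩
          rwa [frontier, hD.interior_eq]
        have hb := hbdD (slc w t₁) t₁ (by rw [hrw t₁ t₁]; exact hfr)
        simp only [hrw] at hb
        exact hb.mono_left (nhdsWithin_mono _ hUV)
  -- final assembly
  have hfinal : ∫ u in S, H u = 0 := by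
    rw [← integral_indicator hSmeas,
      ← mps.integral_comp e.symm.measurableEmbedding (S.indicator H),
      Measure.volume_eq_prod ℝ (Fin n → ℝ),
      integral_prod_symm _ (by rw [← Measure.volume_eq_prod ℝ (Fin n → ℝ)]; exact hcompH)]
    have hzero : (fun w => ∫ t, S.indicator H (e.symm (t, w))) =ᵐ[volume] fun _ => (0:ℝ) := main
    rw [integral_congr_ae hzero, integral_zero]
  exact hfinal
end
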